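/- Let x̄ be a local optimal solution to the problem: minimize φ(x) subject to x ∈ Ω_i for all i ∈ ℕ, where φ : ℝⁿ → ℝ ∪ {±∞} is finite at x̄ and the sets Ω_i ⊆ ℝⁿ are locally closed around x̄. Assume the system {Ω_i}_{i∈ℕ} has the CHIP at x̄ and satisfies the NQC at x̄. Then −∂̂⁺φ(x̄) ⊆ cl{Σ_{i∈I} x*_i | x*_i ∈ N(x̄;Ω_i), I a finite subset of ℕ}. If in addition the set {Σ_{i∈I} x*_i | x*_i ∈ N(x̄;Ω_i), I finite} is closed (the NCC), the closure can be omitted. In particular, if φ is Fréchet differentiable at x̄, then 0 ∈ ∇φ(x̄) + cl{Σ_{i∈I} x*_i | x*_i ∈ N(x̄;Ω_i), I finite}. -/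

import Mathlib

open Filter Topology Set Metric

section Defs
variable {E : Type*} [NormedAddCommGroup E] [NormedSpace ℝ E]

/-- Bouligand–Severi contingent tangent cone. -/
def tcone (Ω : Set E) (x : E) : Set E :=
  {v | ∃ (t : ℕ → ℝ) (w : ℕ → E), (∀ k, 0 < t k) ∧
    Tendsto t atTop (nhds 0) ∧ Tendsto w atTop (nhds v) ∧ ∀ k, x + t k • w k ∈ Ω}
end Defs

section Defs2
variable {E F : Type*} [NormedAddCommGroup E] [InnerProductSpace ℝ E]
  [NormedAddCommGroup F] [InnerProductSpace ℝ F]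

/-- Fréchet (regular/pre-) normal cone. -/
def fnormal (Ω : Set E) (x : E) : Set E :=
  {v | ∀ ε > 0, ∃ δ > 0, ∀ u ∈ Ω, ‖u - x‖ < δ → (inner ℝ v (u - x) : ℝ) ≤ ε * ‖u - x‖}

/-- Limiting (Mordukhovich) normal cone. -/
def lnormal (Ω : Set E) (x : E) : Set E :=
  {v | ∃ xk vk : ℕ → E, (∀ k, xk k ∈ Ω) ∧ (∀ k, vk k ∈ fnormal Ω (xk k)) ∧
    Tendsto xk atTop (nhds x) ∧ Tendsto vk atTop (nhds v)}

/-- Normal cone of convex analysis. -/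
def cnormal (Ω : Set E) (x : E) : Set E :=
  {v | ∀ y ∈ Ω, (inner ℝ v (y - x) : ℝ) ≤ 0}

/-- All finite sums `∑_{i ∈ I} xᵢ` with `xᵢ ∈ Nc i`. -/
def finSums (Nc : ℕ → Set E) : Set E :=
  {v | ∃ (I : Finset ℕ) (xs : ℕ → E), (∀ i ∈ I, xs i ∈ Nc i) ∧ v = ∑ i ∈ I, xs i}

/-- Fréchet normal cone in a product of inner ℝ product spaces
(equivalently, w.r.t. the Euclidean product structure). -/
def fnormalP (Ω : Set (E × F)) (z : E × F) : Set (E × F) :=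
  {v | ∀ ε > 0, ∃ δ > 0, ∀ u ∈ Ω, ‖u - z‖ < δ →
    (inner ℝ v.1 (u.1 - z.1) : ℝ) + (inner ℝ v.2 (u.2 - z.2) : ℝ) ≤ ε * ‖u - z‖}

/-- Limiting normal cone in a product of inner ℝ product spaces. -/
def lnormalP (Ω : Set (E × F)) (z : E × F) : Set (E × F) :=
  {v | ∃ zk vk : ℕ → E × F, (∀ k, zk k ∈ Ω) ∧ (∀ k, vk k ∈ fnormalP Ω (zk k)) ∧
    Tendsto zk atTop (nhds z) ∧ Tendsto vk atTop (nhds v)}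

/-- Epigraph of an extended-real-valued function. -/
def epiSet (φ : E → EReal) : Set (E × ℝ) := {p | φ p.1 ≤ (p.2 : EReal)}

/-- Basic (limiting, Mordukhovich) subdifferential. -/
noncomputable def bsub (φ : E → EReal) (x : E) : Set E :=
  {v | (v, (-1 : ℝ)) ∈ lnormalP (epiSet φ) (x, (φ x).toReal)}

/-- Singular subdifferential. -/
noncomputable def ssub (φ : E → EReal) (x : E) : Set E :=
  {v | (v, (0 : ℝ)) ∈ lnormalP (epiSet φ) (x, (φ x).toReal)}

/-- Fréchet subdifferential. -/
def fsub (φ : E → EReal) (x : E) : Set E :=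
  {v | ∀ ε > 0, ∃ δ > 0, ∀ u, ‖u - x‖ < δ →
    φ x + (((inner ℝ v (u - x) : ℝ) - ε * ‖u - x‖ : ℝ) : EReal) ≤ φ u}

/-- Fréchet upper subdifferential `∂̂⁺φ(x) = −∂̂(−φ)(x)`. -/
def fsubUpper (φ : E → EReal) (x : E) : Set E := {v | -v ∈ fsub (fun u => -(φ u)) x}
end Defs2


section Aux
variable {H : Type*} [NormedAddCommGroup H] [InnerProductSpace ℝ H]

lemma zero_mem_fnormal (S : Set H) (x : H) : (0 : H) ∈ fnormal S x := by
  intro ε hε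
  exact ⟨1, one_pos, fun u _ _ => by
    simp [inner_zero_left]
    positivity⟩

lemma fnormal_smul {S : Set H} {x v : H} {c : ℝ} (hc : 0 < c) (hv : v ∈ fnormal S x) :
    c • v ∈ fnormal S x := by
  intro ε hε
  obtain ⟨δ, hδ, h⟩ := hv (ε / c) (by positivity)
  refine ⟨δ, hδ, fun u hu hd => ?_⟩
  have := h u hu hd
  rw [real_inner_smul_left]
  calc c * (inner ℝ v (u - x) : ℝ) ≤ c * (ε / c * ‖u - x‖) := by
        exact mul_le_mul_of_nonneg_left this hc.le
    _ = ε * ‖u - x‖ := by field_simp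

lemma lnormal_smul {S : Set H} {x v : H} {c : ℝ} (hc : 0 < c) (hv : v ∈ lnormal S x) :
    c • v ∈ lnormal S x := by
  obtain ⟨xk, vk, h1, h2, h3, h4⟩ := hv
  exact ⟨xk, fun k => c • vk k, h1, fun k => fnormal_smul hc (h2 k), h3, h4.const_smul c⟩

lemma zero_mem_lnormal {S : Set H} {x : H} (hx : x ∈ S) : (0 : H) ∈ lnormal S x :=
  ⟨fun _ => x, fun _ => 0, fun _ => hx, fun _ => zero_mem_fnormal S x,
    tendsto_const_nhds, tendsto_const_nhds⟩

lemma nearest_mem_fnormal {S : Set H} {p z : H} (hp : p ∈ S)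
    (h : ∀ u ∈ S, ‖z - p‖ ≤ ‖z - u‖) : z - p ∈ fnormal S p := by
  intro ε hε
  refine ⟨2 * ε, by positivity, fun u hu hd => ?_⟩
  have key : (inner ℝ (z - p) (u - p) : ℝ) ≤ ‖u - p‖ ^ 2 / 2 := by
    have h1 : ‖z - p‖ ^ 2 ≤ ‖z - u‖ ^ 2 := by
      have := h u hu
      nlinarith [norm_nonneg (z - p), norm_nonneg (z - u)]
    have h2 : z - u = (z - p) - (u - p) := by abel
    rw [h2] at h1
    have h3 := norm_sub_sq_real (z - p) (u - p)
    linarith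
  calc (inner ℝ (z - p) (u - p) : ℝ) ≤ ‖u - p‖ ^ 2 / 2 := key
    _ = (‖u - p‖ / 2) * ‖u - p‖ := by ring
    _ ≤ ε * ‖u - p‖ := by
        apply mul_le_mul_of_nonneg_right _ (norm_nonneg _)
        linarith

section TC
variable {G : Type*} [NormedAddCommGroup G] [NormedSpace ℝ G]

lemma zero_mem_tcone {Ω : Set G} {x : G} (hx : x ∈ Ω) : (0 : G) ∈ tcone Ω x := by
  refine ⟨fun k => 1 / (k + 1), fun _ => 0, fun k => by positivity, ?_, tendsto_const_nhds,
    fun k => by simpa using hx⟩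
  exact tendsto_one_div_add_atTop_nhds_zero_nat

lemma tcone_smul_mem {Ω : Set G} {x d : G} {c : ℝ} (hc : 0 < c) (hd : d ∈ tcone Ω x) :
    c • d ∈ tcone Ω x := by
  obtain ⟨t, w, h1, h2, h3, h4⟩ := hd
  refine ⟨fun k => t k / c, fun k => c • w k, fun k => div_pos (h1 k) hc, ?_, h3.const_smul c,
    fun k => ?_⟩
  · simpa using h2.div_const c
  · have : (t k / c) • c • w k = t k • w k := by
      rw [smul_smul]; congr 1; field_simp
    rw [this]; exact h4 k

lemma tcone_isClosed (Ω : Set G) (x : G) : IsClosed (tcone Ω x) := by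
  rw [← isSeqClosed_iff_isClosed]
  intro vs v hvs hv
  have key : ∀ j : ℕ, ∃ (s : ℝ) (u : G), 0 < s ∧ s < 1 / (j + 1) ∧ ‖u - vs j‖ < 1 / (j + 1) ∧
      x + s • u ∈ Ω := by
    intro j
    obtain ⟨t, w, h1, h2, h3, h4⟩ := hvs j
    have hpos : (0:ℝ) < 1 / (j + 1) := by positivity
    have e1 : ∀ᶠ k in atTop, t k < 1 / (j + 1 : ℝ) :=
      h2.eventually (eventually_lt_nhds hpos)
    have e2 : ∀ᶠ k in atTop, ‖w k - vs j‖ < 1 / (j + 1 : ℝ) := by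
      have := (tendsto_iff_norm_sub_tendsto_zero.mp h3).eventually (eventually_lt_nhds hpos)
      simpa using this
    obtain ⟨k, hk1, hk2⟩ := (e1.and e2).exists
    exact ⟨t k, w k, h1 k, hk1, hk2, h4 k⟩
  choose s u hs1 hs2 hs3 hs4 using key
  have hb : Tendsto (fun j : ℕ => 1 / ((j:ℝ) + 1)) atTop (nhds 0) :=
    tendsto_one_div_add_atTop_nhds_zero_nat
  refine ⟨s, u, hs1, ?_, ?_, hs4⟩
  · exact squeeze_zero (fun j => (hs1 j).le) (fun j => (hs2 j).le) hb
  · rw [tendsto_iff_norm_sub_tendsto_zero]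
    have hbd : ∀ j, ‖u j - v‖ ≤ 1 / (j + 1) + ‖vs j - v‖ := by
      intro j
      calc ‖u j - v‖ ≤ ‖u j - vs j‖ + ‖vs j - v‖ := norm_sub_le_norm_sub_add_norm_sub _ _ _
        _ ≤ 1 / (j + 1) + ‖vs j - v‖ := by
            have := (hs3 j).le; gcongr
    have hvt : Tendsto (fun j => ‖vs j - v‖) atTop (nhds 0) :=
      tendsto_iff_norm_sub_tendsto_zero.mp hv
    have := hb.add hvt
    rw [add_zero] at this
    exact squeeze_zero (fun j => norm_nonneg _) hbd this
end TC

section Polar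
variable {H : Type*} [NormedAddCommGroup H] [InnerProductSpace ℝ H]

lemma fnormal_polar_tcone {Ω : Set H} {x w d : H} (hw : w ∈ fnormal Ω x)
    (hd : d ∈ tcone Ω x) : (inner ℝ w d : ℝ) ≤ 0 := by
  obtain ⟨t, ws, h1, h2, h3, h4⟩ := hd
  have key : ∀ ε > (0:ℝ), (inner ℝ w d : ℝ) ≤ ε * ‖d‖ := by
    intro ε hε
    obtain ⟨δ, hδ, h⟩ := hw ε hε
    have hsm : Tendsto (fun k => t k • ws k) atTop (nhds 0) := by
      have := h2.smul h3; simpa using this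
    have he : ∀ᶠ k in atTop, ‖t k • ws k‖ < δ := by
      have := (tendsto_iff_norm_sub_tendsto_zero.mp hsm).eventually (eventually_lt_nhds hδ)
      simpa using this
    have hev : ∀ᶠ k in atTop, (inner ℝ w (ws k) : ℝ) ≤ ε * ‖ws k‖ := by
      filter_upwards [he] with k hk
      have hu := h (x + t k • ws k) (h4 k) (by simpa using hk)
      simp only [add_sub_cancel_left] at hu
      rw [real_inner_smul_right, norm_smul, Real.norm_eq_abs, abs_of_pos (h1 k)] at hu
      have hu2 : t k * (inner ℝ w (ws k) : ℝ) ≤ t k * (ε * ‖ws k‖) := by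
        rw [show t k * (ε * ‖ws k‖) = ε * (t k * ‖ws k‖) by ring]; exact hu
      exact le_of_mul_le_mul_left hu2 (h1 k)
    have hl : Tendsto (fun k => (inner ℝ w (ws k) : ℝ)) atTop (nhds (inner ℝ w d : ℝ)) :=
      (Continuous.inner continuous_const continuous_id).continuousAt.tendsto.comp h3
    have hr : Tendsto (fun k => ε * ‖ws k‖) atTop (nhds (ε * ‖d‖)) :=
      (tendsto_const_nhds.mul (h3.norm))
    exact le_of_tendsto_of_tendsto hl hr hev
  by_cases hd0 : d = 0
  · simp [hd0]
  · by_contra hlt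
    push_neg at hlt
    have hdn : 0 < ‖d‖ := norm_pos_iff.mpr hd0
    have := key ((inner ℝ w d : ℝ) / (2 * ‖d‖)) (by positivity)
    rw [div_mul_eq_mul_div] at this
    have h5 : (inner ℝ w d : ℝ) * ‖d‖ / (2 * ‖d‖) = (inner ℝ w d : ℝ) / 2 := by
      field_simp
    rw [h5] at this
    linarith
end Polar

section Rescale
variable {H : Type*} [NormedAddCommGroup H] [InnerProductSpace ℝ H]

lemma fnormal_rescale {Ω : Set H} {xb q v : H} {t R : ℝ} (ht : 0 < t) (hq : ‖q‖ < R)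
    (hv : v ∈ fnormal {u : H | xb + t • u ∈ Ω ∧ ‖u‖ ≤ R} q) :
    v ∈ fnormal Ω (xb + t • q) := by
  intro ε hε
  obtain ⟨δ, hδ, h⟩ := hv ε hε
  refine ⟨min (t * δ) (t * (R - ‖q‖)), by
    have : (0:ℝ) < R - ‖q‖ := by linarith
    positivity, fun u' hu' hd => ?_⟩
  set u := t⁻¹ • (u' - xb) with hu
  have key : u' = xb + t • u := by
    rw [hu, smul_smul, mul_inv_cancel₀ ht.ne', one_smul]; abel
  have hsub : u' - (xb + t • q) = t • (u - q) := by
    rw [key, smul_sub]; abel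
  have hnn : ‖u' - (xb + t • q)‖ = t * ‖u - q‖ := by
    rw [hsub, norm_smul, Real.norm_eq_abs, abs_of_pos ht]
  have hnorm : ‖u - q‖ = t⁻¹ * ‖u' - (xb + t • q)‖ := by
    rw [hnn]; field_simp
  have hd1 : ‖u - q‖ < δ := by
    rw [hnorm]
    have h2 : ‖u' - (xb + t • q)‖ < t * δ := lt_of_lt_of_le hd (min_le_left _ _)
    calc t⁻¹ * ‖u' - (xb + t • q)‖ < t⁻¹ * (t * δ) := by
          exact mul_lt_mul_of_pos_left h2 (by positivity)
      _ = δ := by field_simp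
  have hd2 : ‖u‖ ≤ R := by
    have h2 : ‖u' - (xb + t • q)‖ < t * (R - ‖q‖) := lt_of_lt_of_le hd (min_le_right _ _)
    have h3 : ‖u - q‖ < R - ‖q‖ := by
      rw [hnorm]
      calc t⁻¹ * ‖u' - (xb + t • q)‖ < t⁻¹ * (t * (R - ‖q‖)) :=
            mul_lt_mul_of_pos_left h2 (by positivity)
        _ = R - ‖q‖ := by field_simp
    have h4 : ‖u‖ ≤ ‖u - q‖ + ‖q‖ := by
      have := norm_add_le (u - q) q; simpa using this
    linarith
  have hmem : u ∈ {u : H | xb + t • u ∈ Ω ∧ ‖u‖ ≤ R} := ⟨by rw [← key]; exact hu', hd2⟩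
  have := h u hmem hd1
  have hinner : (inner ℝ v (u' - (xb + t • q)) : ℝ) = t * (inner ℝ v (u - q) : ℝ) := by
    rw [hsub, real_inner_smul_right]
  rw [hinner, hnn]
  calc t * (inner ℝ v (u - q) : ℝ) ≤ t * (ε * ‖u - q‖) := mul_le_mul_of_nonneg_left this ht.le
    _ = ε * (t * ‖u - q‖) := by ring
end Rescale

section Prox
variable {H : Type*} [NormedAddCommGroup H] [InnerProductSpace ℝ H] [ProperSpace H]

lemma prox_tcone_mem_lnormal {Ω : Set H} {xb p xh : H} {r : ℝ}
    (hxb : xb ∈ Ω) (hr : 0 < r) (hcl : IsClosed (Ω ∩ Metric.closedBall xb r))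
    (hp : p ∈ tcone Ω xb) (hnear : ∀ u ∈ tcone Ω xb, ‖xh - p‖ ≤ ‖xh - u‖) :
    xh - p ∈ lnormal Ω xb := by
  by_cases hvz : xh - p = 0
  · rw [hvz]; exact zero_mem_lnormal hxb
  set v := xh - p with hv
  set z := p + (2⁻¹ : ℝ) • v with hz
  have hzp : z - p = (2⁻¹ : ℝ) • v := by rw [hz]; abel
  have hzpn : ‖z - p‖ = ‖v‖ / 2 := by
    rw [hzp, norm_smul]; simp; ring
  have hK : ∀ u ∈ tcone Ω xb, ‖v‖^2/4 + ‖u - p‖^2/2 ≤ ‖z - u‖^2 := by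
    intro u hu
    have h1 : ‖v‖ ≤ ‖xh - u‖ := hnear u hu
    have h2 : xh - u = v - (u - p) := by rw [hv]; abel
    have h3 : ‖v - (u - p)‖^2 = ‖v‖^2 - 2*(inner ℝ v (u - p) : ℝ) + ‖u - p‖^2 :=
      norm_sub_sq_real v (u - p)
    have h4 : (inner ℝ v (u - p) : ℝ) ≤ ‖u - p‖^2/2 := by
      rw [h2] at h1
      have h1sq : ‖v‖^2 ≤ ‖v - (u - p)‖^2 := by
        nlinarith [norm_nonneg v, norm_nonneg (v - (u - p))]
      linarith [h3 ▸ h1sq]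
    have h5 : z - u = (2⁻¹ : ℝ) • v - (u - p) := by rw [hz]; abel
    have h6 : ‖(2⁻¹ : ℝ) • v - (u - p)‖^2
        = ‖(2⁻¹ : ℝ) • v‖^2 - 2*(inner ℝ ((2⁻¹:ℝ) • v) (u - p) : ℝ) + ‖u - p‖^2 :=
      norm_sub_sq_real _ _
    rw [h5, h6, real_inner_smul_left, norm_smul]
    simp only [Real.norm_eq_abs]
    rw [abs_of_pos (by norm_num : (0:ℝ) < 2⁻¹), mul_pow]
    nlinarith [h4]
  obtain ⟨t, ws, htpos, ht0, hws, hmem⟩ := hp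
  set R : ℝ := 2*‖z‖ + ‖p‖ + 2 with hR
  have hRpos : 0 < R := by positivity
  have hev : ∀ᶠ k in atTop, t k * R ≤ r ∧ ‖ws k - p‖ ≤ 1 := by
    have e1 : ∀ᶠ k in atTop, t k * R ≤ r := by
      have hlt : ∀ᶠ k in atTop, t k < r / R := by
        have := ht0.eventually (eventually_lt_nhds (by positivity : (0:ℝ) < r / R))
        exact this
      filter_upwards [hlt] with k hk
      have := mul_le_mul_of_nonneg_right hk.le hRpos.le
      calc t k * R ≤ r / R * R := this
        _ = r := by field_simp
    have e2 : ∀ᶠ k in atTop, ‖ws k - p‖ ≤ 1 := by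
      have := (tendsto_iff_norm_sub_tendsto_zero.mp hws).eventually
        (eventually_le_nhds (by norm_num : (0:ℝ) < 1))
      simpa using this
    exact e1.and e2
  obtain ⟨K, hKp⟩ := eventually_atTop.mp hev
  set t' : ℕ → ℝ := fun k => t (k + K) with ht'
  set w' : ℕ → H := fun k => ws (k + K) with hw'
  have ht'pos : ∀ k, 0 < t' k := fun k => htpos _
  have ht'0 : Tendsto t' atTop (nhds 0) := ht0.comp (tendsto_add_atTop_nat K)
  have hw's : Tendsto w' atTop (nhds p) := hws.comp (tendsto_add_atTop_nat K)
  have ht'r : ∀ k, t' k * R ≤ r := fun k => (hKp (k + K) (Nat.le_add_left _ _)).1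
  have hw'1 : ∀ k, ‖w' k - p‖ ≤ 1 := fun k => (hKp (k + K) (Nat.le_add_left _ _)).2
  have hw'mem : ∀ k, xb + t' k • w' k ∈ Ω := fun k => hmem (k + K)
  set A : ℕ → Set H := fun k => {u : H | xb + t' k • u ∈ Ω ∧ ‖u‖ ≤ R} with hA
  have hA0 : ∀ k, (0:H) ∈ A k := fun k => ⟨by simpa using hxb, by simpa using hRpos.le⟩
  have hAcl : ∀ k, IsClosed (A k) := by
    intro k
    have heq : A k = (fun u : H => xb + t' k • u) ⁻¹'
        ((Ω ∩ Metric.closedBall xb r) ∩ Metric.closedBall xb (t' k * R)) := by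
      ext u
      simp only [hA, Set.mem_setOf_eq, Set.mem_preimage, Set.mem_inter_iff,
        Metric.mem_closedBall]
      have hd : dist (xb + t' k • u) xb = t' k * ‖u‖ := by
        rw [dist_eq_norm, add_sub_cancel_left, norm_smul, Real.norm_eq_abs,
          abs_of_pos (ht'pos k)]
      constructor
      · rintro ⟨h1, h2⟩
        refine ⟨⟨h1, ?_⟩, ?_⟩
        · rw [hd]
          calc t' k * ‖u‖ ≤ t' k * R := mul_le_mul_of_nonneg_left h2 (ht'pos k).le
            _ ≤ r := ht'r k
        · rw [hd]
          exact mul_le_mul_of_nonneg_left h2 (ht'pos k).le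
      · rintro ⟨⟨h1, _⟩, h3⟩
        refine ⟨h1, ?_⟩
        rw [hd] at h3
        exact le_of_mul_le_mul_left h3 (ht'pos k)
    rw [heq]
    exact IsClosed.preimage (continuous_const.add (continuous_id.const_smul _))
      ((hcl.inter Metric.isClosed_closedBall))
  have hAsub : ∀ k, A k ⊆ Metric.closedBall 0 R := by
    intro k u hu
    rw [Metric.mem_closedBall, dist_zero_right]
    exact hu.2
  have hAcpt : ∀ k, IsCompact (A k) := fun k =>
    (isCompact_closedBall 0 R).of_isClosed_subset (hAcl k) (hAsub k)
  have hex : ∀ k, ∃ q, q ∈ A k ∧ ∀ u ∈ A k, ‖z - q‖ ≤ ‖z - u‖ := by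
    intro k
    obtain ⟨q, hq1, hq2⟩ := (hAcpt k).exists_isMinOn ⟨0, hA0 k⟩
      ((continuous_const.sub continuous_id).norm.continuousOn :
        ContinuousOn (fun u : H => ‖z - u‖) (A k))
    exact ⟨q, hq1, fun u hu => hq2 hu⟩
  choose q hqA hqmin using hex
  have hqb : ∀ k, ‖q k‖ ≤ 2*‖z‖ := by
    intro k
    have h1 : ‖z - q k‖ ≤ ‖z‖ := by
      have := hqmin k 0 (hA0 k)
      simpa using this
    have h2 : ‖q k‖ ≤ ‖q k - z‖ + ‖z‖ := by
      have := norm_add_le (q k - z) z; simpa using this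
    rw [norm_sub_rev] at h1
    linarith
  obtain ⟨qbar, hqbar_mem, φ, hφ, hconv⟩ :=
    (isCompact_closedBall (0:H) (2*‖z‖)).tendsto_subseq
      (fun k => by rw [Metric.mem_closedBall, dist_zero_right]; exact hqb k)
  have ht''0 : Tendsto (fun j => t' (φ j)) atTop (nhds 0) := ht'0.comp hφ.tendsto_atTop
  have hqbar_t : qbar ∈ tcone Ω xb :=
    ⟨fun j => t' (φ j), fun j => q (φ j), fun j => ht'pos _, ht''0, hconv,
      fun j => (hqA (φ j)).1⟩
  -- ‖z - qbar‖ ≤ ‖v‖/2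
  have hw'A : ∀ k, w' k ∈ A k := by
    intro k
    refine ⟨hw'mem k, ?_⟩
    have := hw'1 k
    have h2 : ‖w' k‖ ≤ ‖w' k - p‖ + ‖p‖ := by
      have := norm_add_le (w' k - p) p; simpa using this
    rw [hR]
    have hz0 : 0 ≤ ‖z‖ := norm_nonneg _
    linarith
  have hzq : ‖z - qbar‖ ≤ ‖v‖/2 := by
    have hle : ∀ j, ‖z - q (φ j)‖ ≤ ‖z - w' (φ j)‖ := fun j =>
      hqmin (φ j) (w' (φ j)) (hw'A (φ j))
    have hL : Tendsto (fun j => ‖z - q (φ j)‖) atTop (nhds ‖z - qbar‖) :=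
      ((continuous_const.sub continuous_id).norm.continuousAt.tendsto).comp hconv
    have hRt : Tendsto (fun j => ‖z - w' (φ j)‖) atTop (nhds ‖z - p‖) :=
      ((continuous_const.sub continuous_id).norm.continuousAt.tendsto).comp
        (hw's.comp hφ.tendsto_atTop)
    rw [← hzpn]
    exact le_of_tendsto_of_tendsto hL hRt (Eventually.of_forall hle)
  have hqbar_p : qbar = p := by
    have h1 := hK qbar hqbar_t
    have h2 : ‖z - qbar‖^2 ≤ (‖v‖/2)^2 := by
      have := hzq
      nlinarith [norm_nonneg (z - qbar)]
    have h3 : ‖qbar - p‖^2 ≤ 0 := by nlinarith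
    have h4 : ‖qbar - p‖ = 0 := by nlinarith [norm_nonneg (qbar - p), sq_nonneg ‖qbar - p‖]
    rw [norm_eq_zero, sub_eq_zero] at h4
    exact h4
  -- assemble lnormal membership for (2⁻¹ : ℝ) • v
  have hfn : ∀ j, z - q (φ j) ∈ fnormal Ω (xb + t' (φ j) • q (φ j)) := by
    intro j
    have h1 : z - q (φ j) ∈ fnormal (A (φ j)) (q (φ j)) :=
      nearest_mem_fnormal (hqA (φ j)) (hqmin (φ j))
    have h2 : ‖q (φ j)‖ < R := by
      have := hqb (φ j); rw [hR]
      have : ‖q (φ j)‖ ≤ 2*‖z‖ := hqb (φ j)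
      have hp0 : 0 ≤ ‖p‖ := norm_nonneg _
      linarith
    exact fnormal_rescale (ht'pos (φ j)) h2 h1
  have hhalf : (2⁻¹ : ℝ) • v ∈ lnormal Ω xb := by
    refine ⟨fun j => xb + t' (φ j) • q (φ j), fun j => z - q (φ j),
      fun j => (hqA (φ j)).1, hfn, ?_, ?_⟩
    · have hsm : Tendsto (fun j => t' (φ j) • q (φ j)) atTop (nhds 0) := by
        have hb : Tendsto (fun j => t' (φ j) * (2*‖z‖)) atTop (nhds 0) := by
          have := ht''0.mul_const (2*‖z‖); simpa using this
        refine squeeze_zero_norm (fun j => ?_) hb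
        rw [norm_smul, Real.norm_eq_abs, abs_of_pos (ht'pos _)]
        exact mul_le_mul_of_nonneg_left (hqb _) (ht'pos _).le
      have := tendsto_const_nhds.add hsm (f := fun _ : ℕ => xb)
      simpa using this
    · have : Tendsto (fun j => z - q (φ j)) atTop (nhds (z - qbar)) :=
        tendsto_const_nhds.sub hconv
      rw [hqbar_p, hzp] at this
      exact this
  have := lnormal_smul (by norm_num : (0:ℝ) < 2) hhalf
  rw [smul_smul] at this
  norm_num at this
  exact this
end Prox

section MainCone
variable {H : Type*} [NormedAddCommGroup H] [InnerProductSpace ℝ H] [ProperSpace H]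

lemma penalized_min (Λ : ℕ → Set H) (hclosed : ∀ i, IsClosed (Λ i)) (h0 : ∀ i, (0:H) ∈ Λ i)
    (w : H) (m : ℕ) :
    ∃ (xh : H) (p : ℕ → H),
      (∀ i, p i ∈ Λ i) ∧
      (∀ i, ∀ u ∈ Λ i, ‖xh - p i‖ ≤ ‖xh - u‖) ∧
      w = (1/(m+1) : ℝ) • xh + ∑ i ∈ Finset.range m, (xh - p i) ∧
      ((1/(m+1) : ℝ)/2 * ‖xh‖^2
          + ∑ i ∈ Finset.range m, (1/2 : ℝ) * (Metric.infDist xh (Λ i))^2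
        ≤ (inner ℝ w xh : ℝ)) ∧
      (∀ i, Metric.infDist xh (Λ i) = ‖xh - p i‖) := by
  classical
  set κ : ℝ := 1/(m+1) with hκ
  have hκpos : 0 < κ := by positivity
  set f : H → ℝ := fun x => -(inner ℝ w x : ℝ) + κ/2 * ‖x‖^2
      + ∑ i ∈ Finset.range m, (1/2 : ℝ) * (Metric.infDist x (Λ i))^2 with hf
  have hfc : Continuous f := by
    refine Continuous.add (Continuous.add ?_ ?_) ?_
    · exact (Continuous.inner continuous_const continuous_id).neg
    · exact continuous_const.mul (continuous_norm.pow 2)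
    · exact continuous_finset_sum _ fun i _ =>
        continuous_const.mul ((Metric.continuous_infDist_pt (Λ i)).pow 2)
  have hf0 : f 0 = 0 := by
    simp [hf, Metric.infDist_zero_of_mem (h0 _)]
  set M : ℝ := 2*‖w‖/κ + 1 with hM
  have hMpos : 0 < M := by positivity
  obtain ⟨xh, hxhball, hxhmin⟩ := (isCompact_closedBall (0:H) M).exists_isMinOn
    ⟨0, by simpa using hMpos.le⟩ hfc.continuousOn
  have hfxh0 : f xh ≤ 0 := by
    rw [← hf0]
    exact hxhmin (by simpa using hMpos.le)
  have hglobal : ∀ x, f xh ≤ f x := by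
    intro x
    by_cases hx : x ∈ Metric.closedBall (0:H) M
    · exact hxhmin hx
    · have hxn : M < ‖x‖ := by
        rw [Metric.mem_closedBall, dist_zero_right, not_le] at hx
        exact hx
      have h1 : (inner ℝ w x : ℝ) ≤ ‖w‖ * ‖x‖ := real_inner_le_norm w x
      have h2 : (0:ℝ) ≤ ∑ i ∈ Finset.range m, (1/2 : ℝ) * (Metric.infDist x (Λ i))^2 :=
        Finset.sum_nonneg fun i _ => by positivity
      have h3 : 2*‖w‖/κ * κ = 2*‖w‖ := by field_simp
      have h4 : 0 ≤ ‖w‖ := norm_nonneg w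
      have h5 : 0 < ‖x‖ := lt_trans hMpos hxn
      have hMx : 2*‖w‖ + κ < κ * ‖x‖ := by
        have := (mul_lt_mul_iff_right₀ hκpos).mpr hxn
        rw [hM] at this
        calc 2*‖w‖ + κ = κ * (2*‖w‖/κ + 1) := by field_simp
          _ < κ * ‖x‖ := by rw [← hM]; exact this
      have hfx : 0 < f x := by
        rw [hf]
        have : ‖w‖ * ‖x‖ < κ/2 * ‖x‖^2 := by nlinarith
        nlinarith
      linarith
  have hnear : ∀ i, ∃ p ∈ Λ i, Metric.infDist xh (Λ i) = dist xh p := fun i =>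
    (hclosed i).exists_infDist_eq_dist ⟨0, h0 i⟩ xh
  choose p hpΛ hpd using hnear
  have hpd' : ∀ i, Metric.infDist xh (Λ i) = ‖xh - p i‖ := fun i => by
    rw [hpd i, dist_eq_norm]
  have hnearest : ∀ i, ∀ u ∈ Λ i, ‖xh - p i‖ ≤ ‖xh - u‖ := by
    intro i u hu
    have h1 := Metric.infDist_le_dist_of_mem (x := xh) hu
    rw [hpd' i] at h1
    rw [dist_eq_norm] at h1
    exact h1
  set g : H → ℝ := fun x => -(inner ℝ w x : ℝ) + κ/2 * ‖x‖^2
      + ∑ i ∈ Finset.range m, (1/2 : ℝ) * ‖x - p i‖^2 with hgdef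
  have hfg : ∀ x, f x ≤ g x := by
    intro x
    rw [hf, hgdef]
    simp only
    refine add_le_add le_rfl (Finset.sum_le_sum fun i _ => ?_)
    have h1 : Metric.infDist x (Λ i) ≤ ‖x - p i‖ := by
      have := Metric.infDist_le_dist_of_mem (x := x) (hpΛ i)
      rwa [dist_eq_norm] at this
    have h2 : 0 ≤ Metric.infDist x (Λ i) := Metric.infDist_nonneg
    nlinarith
  have hgf : g xh = f xh := by
    rw [hf, hgdef]
    simp only
    congr 1
    exact Finset.sum_congr rfl fun i _ => by rw [hpd' i]
  have hgmin : ∀ x, g xh ≤ g x := fun x => by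
    rw [hgf]; exact le_trans (hglobal x) (hfg x)
  set b : H := w + ∑ i ∈ Finset.range m, p i with hb
  set u0 : H := (κ + (m:ℝ)) • xh - b with hu0
  have hexp : ∀ s : ℝ, g (xh + s • u0)
      = g xh + s * (inner ℝ u0 u0 : ℝ) + s^2 * ((κ + (m:ℝ))/2) * ‖u0‖^2 := by
    intro s
    have e1 : (inner ℝ w (xh + s • u0) : ℝ) = (inner ℝ w xh : ℝ) + s * (inner ℝ w u0 : ℝ) := by
      rw [inner_add_right, real_inner_smul_right]
    have e2 : ‖xh + s • u0‖^2 = ‖xh‖^2 + 2*(s*(inner ℝ xh u0 : ℝ)) + s^2*‖u0‖^2 := by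
      rw [norm_add_sq_real, real_inner_smul_right, norm_smul, Real.norm_eq_abs, mul_pow, sq_abs]
    have e3 : ∀ i : ℕ, ‖xh + s • u0 - p i‖^2
        = ‖xh - p i‖^2 + 2*(s*(inner ℝ (xh - p i) u0 : ℝ)) + s^2*‖u0‖^2 := by
      intro i
      rw [add_sub_right_comm, norm_add_sq_real, real_inner_smul_right, norm_smul,
        Real.norm_eq_abs, mul_pow, sq_abs]
    have e5 : ∑ i ∈ Finset.range m, (inner ℝ (xh - p i) u0 : ℝ)
        = (m:ℝ) * (inner ℝ xh u0 : ℝ) - (inner ℝ (∑ i ∈ Finset.range m, p i) u0 : ℝ) := by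
      rw [← sum_inner]
      have h7 : ∑ i ∈ Finset.range m, (xh - p i)
          = (m:ℝ) • xh - ∑ i ∈ Finset.range m, p i := by
        rw [Finset.sum_sub_distrib, Finset.sum_const, Finset.card_range,
          Nat.cast_smul_eq_nsmul ℝ]
      rw [h7, inner_sub_left, real_inner_smul_left]
    have e4 : ∑ i ∈ Finset.range m, (1/2 : ℝ) * ‖xh + s • u0 - p i‖^2
        = ∑ i ∈ Finset.range m, (1/2 : ℝ) * ‖xh - p i‖^2
          + s * ((m:ℝ) * (inner ℝ xh u0 : ℝ)
              - (inner ℝ (∑ i ∈ Finset.range m, p i) u0 : ℝ))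
          + s^2 * ((m:ℝ)/2) * ‖u0‖^2 := by
      calc ∑ i ∈ Finset.range m, (1/2 : ℝ) * ‖xh + s • u0 - p i‖^2
          = ∑ i ∈ Finset.range m, ((1/2 : ℝ) * ‖xh - p i‖^2
              + s * (inner ℝ (xh - p i) u0 : ℝ) + s^2 * (1/2) * ‖u0‖^2) :=
            Finset.sum_congr rfl fun i _ => by rw [e3 i]; ring
        _ = ∑ i ∈ Finset.range m, (1/2 : ℝ) * ‖xh - p i‖^2
              + s * ∑ i ∈ Finset.range m, (inner ℝ (xh - p i) u0 : ℝ)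
              + s^2 * ((m:ℝ)/2) * ‖u0‖^2 := by
            rw [Finset.sum_add_distrib, Finset.sum_add_distrib, Finset.sum_const,
              Finset.card_range, nsmul_eq_mul, Finset.mul_sum]
            ring
        _ = _ := by rw [e5]
    have e6 : (inner ℝ u0 u0 : ℝ)
        = (κ + (m:ℝ)) * (inner ℝ xh u0 : ℝ)
          - ((inner ℝ w u0 : ℝ) + (inner ℝ (∑ i ∈ Finset.range m, p i) u0 : ℝ)) := by
      conv_lhs => rw [hu0]
      rw [inner_sub_left, real_inner_smul_left, hb, inner_add_left]
    rw [hgdef]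
    simp only
    rw [e1, e2, e4, e6]
    ring
  have hα : 0 < κ + (m:ℝ) := by positivity
  have hquad : ∀ s : ℝ, 0 ≤ s * ‖u0‖^2 + s^2 * ((κ + (m:ℝ))/2) * ‖u0‖^2 := by
    intro s
    have h := hgmin (xh + s • u0)
    rw [hexp s, real_inner_self_eq_norm_sq] at h
    linarith
  have hu0z : u0 = 0 := by
    have h2 := hquad (-(1/(κ + (m:ℝ))))
    have h3 : (-(1/(κ + (m:ℝ)))) * ‖u0‖^2
        + (-(1/(κ + (m:ℝ))))^2 * ((κ + (m:ℝ))/2) * ‖u0‖^2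
        = -(1/(2*(κ + (m:ℝ)))) * ‖u0‖^2 := by
      field_simp
      ring
    rw [h3] at h2
    have h4 : 0 < 1/(2*(κ + (m:ℝ))) := by positivity
    have h5 : ‖u0‖^2 ≤ 0 := by nlinarith
    have h6 : ‖u0‖ = 0 := by nlinarith [norm_nonneg u0, sq_nonneg ‖u0‖]
    rwa [norm_eq_zero] at h6
  have h1 : κ • xh + (m:ℝ) • xh = w + ∑ i ∈ Finset.range m, p i := by
    rw [← add_smul]
    have h9 : (κ + (m:ℝ)) • xh - b = 0 := by rw [← hu0]; exact hu0z
    rw [hb] at h9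
    exact sub_eq_zero.mp h9
  have hstat : w = κ • xh + ∑ i ∈ Finset.range m, (xh - p i) := by
    have h2 : ∑ i ∈ Finset.range m, (xh - p i)
        = (m:ℝ) • xh - ∑ i ∈ Finset.range m, p i := by
      rw [Finset.sum_sub_distrib, Finset.sum_const, Finset.card_range,
        Nat.cast_smul_eq_nsmul ℝ]
    have h3 : w = κ • xh + (m:ℝ) • xh - ∑ i ∈ Finset.range m, p i := by
      rw [h1]; abel
    rw [h2, h3]; abel
  have hbound : κ/2 * ‖xh‖^2
      + ∑ i ∈ Finset.range m, (1/2 : ℝ) * (Metric.infDist xh (Λ i))^2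
      ≤ (inner ℝ w xh : ℝ) := by
    have := hfxh0
    rw [hf] at this
    simp only at this
    linarith
  exact ⟨xh, p, hpΛ, hnearest, hstat, hbound, hpd'⟩

lemma cone_polar_mem_closure_finSums (Λ N : ℕ → Set H)
    (hclosed : ∀ i, IsClosed (Λ i)) (h0 : ∀ i, (0:H) ∈ Λ i)
    (hcone : ∀ i, ∀ c : ℝ, 0 < c → ∀ d ∈ Λ i, c • d ∈ Λ i)
    (hN : ∀ i, ∀ xh p : H, p ∈ Λ i → (∀ u ∈ Λ i, ‖xh - p‖ ≤ ‖xh - u‖) → xh - p ∈ N i)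
    {w : H} (hw : ∀ d : H, (∀ i, d ∈ Λ i) → (inner ℝ w d : ℝ) ≤ 0) :
    w ∈ closure (finSums N) := by
  by_contra hcon
  rw [Metric.mem_closure_iff] at hcon
  push_neg at hcon
  obtain ⟨δ, hδpos, hδ⟩ := hcon
  have hδ' : ∀ y ∈ finSums N, δ ≤ dist w y := hδ
  choose X P hPΛ hPnear hstat hbound hPd using penalized_min Λ hclosed h0 w
  have hmem : ∀ m : ℕ, (∑ i ∈ Finset.range m, (X m - P m i)) ∈ finSums N := by
    intro m
    exact ⟨Finset.range m, fun i => X m - P m i,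
      fun i _ => hN i (X m) (P m i) (hPΛ m i) (hPnear m i), rfl⟩
  have hXlb : ∀ m : ℕ, δ ≤ (1/(m+1) : ℝ) * ‖X m‖ := by
    intro m
    have h1 := hδ' _ (hmem m)
    rw [dist_eq_norm] at h1
    have h2 : w - ∑ i ∈ Finset.range m, (X m - P m i) = (1/(m+1) : ℝ) • X m := by
      rw [hstat m]; abel
    rw [h2, norm_smul, Real.norm_eq_abs, abs_of_pos (by positivity : (0:ℝ) < 1/(m+1))] at h1
    exact h1
  have hκpos : ∀ m : ℕ, (0:ℝ) < 1/(m+1) := fun m => by positivity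
  have hXpos : ∀ m : ℕ, 0 < ‖X m‖ := by
    intro m
    have := hXlb m
    nlinarith [hκpos m]
  have hXub : ∀ m : ℕ, δ * (m+1) ≤ ‖X m‖ := by
    intro m
    have h2 : (0:ℝ) < (m:ℝ)+1 := by positivity
    have h3 := mul_le_mul_of_nonneg_left (hXlb m) h2.le
    have h4 : ((m:ℝ)+1) * ((1/(m+1) : ℝ) * ‖X m‖) = ‖X m‖ := by field_simp
    rw [h4] at h3
    linarith
  set y : ℕ → H := fun m => ‖X m‖⁻¹ • X m with hy
  have hy1 : ∀ m, y m ∈ Metric.closedBall (0:H) 1 := by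
    intro m
    rw [Metric.mem_closedBall, dist_zero_right, hy]
    simp only
    rw [norm_smul, Real.norm_eq_abs, abs_of_pos (inv_pos.mpr (hXpos m)),
      inv_mul_cancel₀ (hXpos m).ne']
  -- lower bound on inner ℝ w (y m)
  have hinner : ∀ m : ℕ, δ/2 ≤ (inner ℝ w (y m) : ℝ) := by
    intro m
    have h1 : (1/(m+1) : ℝ)/2 * ‖X m‖^2 ≤ (inner ℝ w (X m) : ℝ) := by
      have h2 := hbound m
      have h3 : (0:ℝ) ≤ ∑ i ∈ Finset.range m, (1/2 : ℝ) * (Metric.infDist (X m) (Λ i))^2 :=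
        Finset.sum_nonneg fun i _ => by positivity
      linarith
    have h4 : (inner ℝ w (y m) : ℝ) = ‖X m‖⁻¹ * (inner ℝ w (X m) : ℝ) := by
      rw [hy]; simp only; rw [real_inner_smul_right]
    rw [h4]
    have h5 : ‖X m‖⁻¹ * ((1/(m+1) : ℝ)/2 * ‖X m‖^2) ≤ ‖X m‖⁻¹ * (inner ℝ w (X m) : ℝ) :=
      mul_le_mul_of_nonneg_left h1 (inv_pos.mpr (hXpos m)).le
    have h6 : ‖X m‖⁻¹ * ((1/(m+1) : ℝ)/2 * ‖X m‖^2) = (1/(m+1) : ℝ)/2 * ‖X m‖ := by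
      field_simp [(hXpos m).ne']
    rw [h6] at h5
    have h7 : δ/2 ≤ (1/(m+1) : ℝ)/2 * ‖X m‖ := by
      have h8 := hXub m
      have h9 := mul_le_mul_of_nonneg_left h8 (by positivity : (0:ℝ) ≤ (1/(m+1) : ℝ)/2)
      have h10 : (1/(m+1) : ℝ)/2 * (δ * (m+1)) = δ/2 := by field_simp
      rw [h10] at h9
      linarith
    linarith
  -- squared distance bound
  have hdistb : ∀ i m : ℕ, i < m →
      (Metric.infDist (y m) (Λ i))^2 ≤ 2*‖w‖*(1/(m+1) : ℝ)/δ := by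
    intro i m him
    have h1 : Metric.infDist (y m) (Λ i) ≤ ‖X m‖⁻¹ * Metric.infDist (X m) (Λ i) := by
      have hmem2 : ‖X m‖⁻¹ • P m i ∈ Λ i :=
        hcone i _ (inv_pos.mpr (hXpos m)) _ (hPΛ m i)
      have h2 := Metric.infDist_le_dist_of_mem (x := y m) hmem2
      have h3 : dist (y m) (‖X m‖⁻¹ • P m i) = ‖X m‖⁻¹ * ‖X m - P m i‖ := by
        rw [dist_eq_norm, hy]
        simp only
        rw [← smul_sub, norm_smul, Real.norm_eq_abs, abs_of_pos (inv_pos.mpr (hXpos m))]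
      rw [h3, ← hPd m i] at h2
      exact h2
    have h4 : (1/2 : ℝ) * (Metric.infDist (X m) (Λ i))^2 ≤ (inner ℝ w (X m) : ℝ) := by
      have h5 := hbound m
      have h6 : (1/2 : ℝ) * (Metric.infDist (X m) (Λ i))^2
          ≤ ∑ j ∈ Finset.range m, (1/2 : ℝ) * (Metric.infDist (X m) (Λ j))^2 :=
        Finset.single_le_sum (f := fun j => (1/2 : ℝ) * (Metric.infDist (X m) (Λ j))^2)
          (fun j _ => mul_nonneg (by norm_num) (sq_nonneg _)) (Finset.mem_range.mpr him)
      have h7 : (0:ℝ) ≤ (1/(m+1) : ℝ)/2 * ‖X m‖^2 := by positivity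
      linarith
    have h8 : (inner ℝ w (X m) : ℝ) ≤ ‖w‖ * ‖X m‖ := real_inner_le_norm w (X m)
    have h9 : (Metric.infDist (y m) (Λ i))^2 ≤ ‖X m‖⁻¹^2 * (Metric.infDist (X m) (Λ i))^2 := by
      have h10 : 0 ≤ Metric.infDist (y m) (Λ i) := Metric.infDist_nonneg
      have h11 : 0 ≤ ‖X m‖⁻¹ * Metric.infDist (X m) (Λ i) :=
        mul_nonneg (by positivity) Metric.infDist_nonneg
      nlinarith [h1]
    have h12 : (Metric.infDist (X m) (Λ i))^2 ≤ 2 * (‖w‖ * ‖X m‖) := by linarith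
    have h13 : ‖X m‖⁻¹^2 * (Metric.infDist (X m) (Λ i))^2
        ≤ ‖X m‖⁻¹^2 * (2 * (‖w‖ * ‖X m‖)) := by
      apply mul_le_mul_of_nonneg_left h12 (by positivity)
    have h14 : ‖X m‖⁻¹^2 * (2 * (‖w‖ * ‖X m‖)) = 2 * ‖w‖ / ‖X m‖ := by
      field_simp [(hXpos m).ne']
    have h15 : 2 * ‖w‖ / ‖X m‖ ≤ 2*‖w‖*(1/(m+1) : ℝ)/δ := by
      rw [div_le_div_iff₀ (hXpos m) hδpos]
      have h16 := hXub m
      have h17 : 0 ≤ 2*‖w‖ := by positivity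
      have h18 := mul_le_mul_of_nonneg_left h16 h17
      calc 2*‖w‖*δ = 2*‖w‖*(1/(m+1) : ℝ)*(δ*((m:ℝ)+1)) := by
            field_simp
          _ ≤ 2*‖w‖*(1/(m+1) : ℝ)*‖X m‖ := by
            apply mul_le_mul_of_nonneg_left h16 (by positivity)
    linarith
  -- pass to a convergent subsequence
  obtain ⟨ybar, hybarb, φ, hφ, hyconv⟩ := (isCompact_closedBall (0:H) 1).tendsto_subseq hy1
  have hybarΛ : ∀ i, ybar ∈ Λ i := by
    intro i
    have hc1 : Tendsto (fun j => (Metric.infDist (y (φ j)) (Λ i))^2) atTop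
        (nhds ((Metric.infDist ybar (Λ i))^2)) := by
      have := ((Metric.continuous_infDist_pt (Λ i)).pow 2).continuousAt.tendsto.comp hyconv
      exact this
    have hb0 : Tendsto (fun j : ℕ => 2*‖w‖*(1/((j:ℝ)+1))/δ) atTop (nhds 0) := by
      have h1 : Tendsto (fun j : ℕ => (1/((j:ℝ)+1))) atTop (nhds 0) :=
        tendsto_one_div_add_atTop_nhds_zero_nat
      have h2 := (h1.const_mul (2*‖w‖)).div_const δ
      simpa using h2
    have hev : ∀ᶠ j in atTop, (Metric.infDist (y (φ j)) (Λ i))^2 ≤ 2*‖w‖*(1/((j:ℝ)+1))/δ := by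
      filter_upwards [eventually_gt_atTop i] with j hj
      have hij : i < φ j := lt_of_lt_of_le hj (hφ.le_apply)
      have h1 := hdistb i (φ j) hij
      have h2 : (1/((φ j : ℝ)+1)) ≤ (1/((j:ℝ)+1)) := by
        apply one_div_le_one_div_of_le (by positivity)
        have : (j:ℝ) ≤ (φ j : ℝ) := by exact_mod_cast hφ.le_apply
        linarith
      calc (Metric.infDist (y (φ j)) (Λ i))^2 ≤ 2*‖w‖*(1/((φ j : ℝ)+1))/δ := h1
        _ ≤ 2*‖w‖*(1/((j:ℝ)+1))/δ := by
            refine (div_le_div_iff_of_pos_right hδpos).mpr ?_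
            exact mul_le_mul_of_nonneg_left h2 (by positivity)
    have hle : (Metric.infDist ybar (Λ i))^2 ≤ 0 :=
      le_of_tendsto_of_tendsto hc1 hb0 hev
    have h0d : Metric.infDist ybar (Λ i) = 0 := by
      nlinarith [Metric.infDist_nonneg (x := ybar) (s := Λ i)]
    exact ((hclosed i).mem_iff_infDist_zero ⟨0, h0 i⟩).mpr h0d
  have hwy : (inner ℝ w ybar : ℝ) ≤ 0 := hw ybar hybarΛ
  have hge : δ/2 ≤ (inner ℝ w ybar : ℝ) := by
    have hc2 : Tendsto (fun j => (inner ℝ w (y (φ j)) : ℝ)) atTop (nhds (inner ℝ w ybar : ℝ)) :=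
      ((Continuous.inner continuous_const continuous_id).continuousAt.tendsto).comp hyconv
    exact ge_of_tendsto hc2 (Eventually.of_forall fun j => hinner (φ j))
  linarith
end MainCone


/-- **Upper subdifferential conditions for SIP with countable geometric constraints**
(Theorem 4.1).  If `x̄` is a local minimizer of `φ` over `⋂ Ωᵢ`, the system has the
CHIP and NQC at `x̄`, then `−∂̂⁺φ(x̄) ⊆ cl{∑_{i∈I} x*ᵢ | x*ᵢ ∈ N(x̄;Ωᵢ)}`; the closure
can be omitted under the NCC, and in the Fréchet differentiable case
`0 ∈ ∇φ(x̄) + cl{...}`. -/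
theorem SIP_geometric_upper_subdifferential {n : ℕ}
    (Ω : ℕ → Set (EuclideanSpace ℝ (Fin n))) (xb : EuclideanSpace ℝ (Fin n))
    (φ : EuclideanSpace ℝ (Fin n) → EReal)
    (hfin : φ xb ≠ ⊤ ∧ φ xb ≠ ⊥)
    (hxb : ∀ i, xb ∈ Ω i)
    (hloccl : ∀ i, ∃ r > (0 : ℝ), IsClosed (Ω i ∩ closedBall xb r))
    (hopt : ∃ U ∈ nhds xb, ∀ x ∈ U, (∀ i, x ∈ Ω i) → φ xb ≤ φ x)
    (hCHIP : tcone (⋂ i, Ω i) xb = ⋂ i, tcone (Ω i) xb)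
    (hNQC : ∀ xs : ℕ → EuclideanSpace ℝ (Fin n),
      (∀ i, xs i ∈ lnormal (Ω i) xb) →
      Tendsto (fun m => ∑ i ∈ Finset.range m, xs i) atTop (nhds 0) →
      ∀ i, xs i = 0) :
    (∀ v ∈ fsubUpper φ xb, -v ∈ closure (finSums fun i => lnormal (Ω i) xb)) ∧
    (IsClosed (finSums fun i => lnormal (Ω i) xb) →
      ∀ v ∈ fsubUpper φ xb, -v ∈ finSums fun i => lnormal (Ω i) xb) ∧
    (∀ (ψ : EuclideanSpace ℝ (Fin n) → ℝ) (g : EuclideanSpace ℝ (Fin n)),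
      (∀ u, φ u = ((ψ u : ℝ) : EReal)) → HasGradientAt ψ g xb →
      -g ∈ closure (finSums fun i => lnormal (Ω i) xb)) := by
  classical
  have part1 : ∀ v ∈ fsubUpper φ xb, -v ∈ closure (finSums fun i => lnormal (Ω i) xb) := by
    intro v hv
    have hv' : -v ∈ fsub (fun u => -(φ u)) xb := hv
    simp only [fsub, Set.mem_setOf_eq] at hv'
    have hA : (-v) ∈ fnormal (⋂ i, Ω i) xb := by
      intro ε hε
      obtain ⟨δ₁, hδ₁, H1⟩ := hv' ε hε
      obtain ⟨U, hU, hUopt⟩ := hopt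
      obtain ⟨δ₂, hδ₂, hball⟩ := Metric.mem_nhds_iff.mp hU
      refine ⟨min δ₁ δ₂, lt_min hδ₁ hδ₂, fun u hu hd => ?_⟩
      have hd1 : ‖u - xb‖ < δ₁ := lt_of_lt_of_le hd (min_le_left _ _)
      have hd2 : dist u xb < δ₂ := by
        rw [dist_eq_norm]; exact lt_of_lt_of_le hd (min_le_right _ _)
      have huU : u ∈ U := hball (Metric.mem_ball.mpr hd2)
      have hle : φ xb ≤ φ u := hUopt u huU (fun i => (Set.mem_iInter.mp hu) i)
      have hineq := H1 u hd1
      set r : ℝ := (φ xb).toReal with hr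
      have hxr : φ xb = (r : EReal) := (EReal.coe_toReal hfin.1 hfin.2).symm
      set c : ℝ := (inner ℝ (-v) (u - xb) : ℝ) - ε * ‖u - xb‖ with hc
      have hbot : φ u ≠ ⊥ := by
        intro hb
        rw [hb, hxr] at hle
        exact (EReal.coe_ne_bot r) (le_bot_iff.mp hle)
      rcases eq_or_ne (φ u) ⊤ with htop | htop
      · exfalso
        rw [htop, hxr] at hineq
        rw [← EReal.coe_neg, ← EReal.coe_add] at hineq
        simp at hineq
      · set sR : ℝ := (φ u).toReal with hs
        have hxs : φ u = (sR : EReal) := (EReal.coe_toReal htop hbot).symm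
        rw [hxr, hxs] at hineq hle
        rw [← EReal.coe_neg, ← EReal.coe_add, ← EReal.coe_neg,
          EReal.coe_le_coe_iff] at hineq
        rw [EReal.coe_le_coe_iff] at hle
        have hc0 : c ≤ 0 := by linarith
        rw [hc] at hc0
        linarith
    have hpolar : ∀ d : EuclideanSpace ℝ (Fin n),
        (∀ i, d ∈ tcone (Ω i) xb) → (inner ℝ (-v) d : ℝ) ≤ 0 := by
      intro d hd
      have hd' : d ∈ tcone (⋂ i, Ω i) xb := by
        rw [hCHIP]; exact Set.mem_iInter.mpr hd
      exact fnormal_polar_tcone hA hd'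
    choose r hrpos hrcl using hloccl
    exact cone_polar_mem_closure_finSums (fun i => tcone (Ω i) xb)
      (fun i => lnormal (Ω i) xb)
      (fun i => tcone_isClosed _ _)
      (fun i => zero_mem_tcone (hxb i))
      (fun i c hc d hd => tcone_smul_mem hc hd)
      (fun i xh p hp hnear => prox_tcone_mem_lnormal (hxb i) (hrpos i) (hrcl i) hp hnear)
      hpolar
  refine ⟨part1, fun hcl v hv => hcl.closure_eq ▸ part1 v hv, ?_⟩
  intro ψ g hψ hgrad
  have hg : g ∈ fsubUpper φ xb := by
    show -g ∈ fsub (fun u => -(φ u)) xb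
    simp only [fsub, Set.mem_setOf_eq]
    intro ε hε
    have hF := hgrad.hasFDerivAt
    rw [hasFDerivAt_iff_isLittleO_nhds_zero] at hF
    have hb := hF.bound hε
    rw [Metric.eventually_nhds_iff] at hb
    obtain ⟨δ, hδpos, hbd⟩ := hb
    refine ⟨δ, hδpos, fun u hd => ?_⟩
    have hδu : dist (u - xb) 0 < δ := by
      rw [dist_zero_right]; exact hd
    have h1 := hbd hδu
    simp only [add_sub_cancel] at h1
    rw [InnerProductSpace.toDual_apply_apply] at h1
    have h2 : ψ u - ψ xb - (inner ℝ g (u - xb) : ℝ) ≤ ε * ‖u - xb‖ := by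
      have := abs_le.mp (by rwa [Real.norm_eq_abs] at h1)
      exact this.2
    rw [hψ u, hψ xb]
    rw [← EReal.coe_neg, ← EReal.coe_neg, ← EReal.coe_add, EReal.coe_le_coe_iff]
    rw [inner_neg_left]
    linarith
  exact part1 g hg
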